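/- For every infinite cardinal κ, the product of the beth numbers ∏_{α<κ} ℶ_α equals ℶ_{κ+1}. -/

import Mathlib

open Cardinal Set

theorem aux_prod_comp_le {ι : Type u} (h : ι → Cardinal.{u}) (hh : ∀ j, 1 ≤ h j)
    {g : ι → ι} (hg : Function.Injective g) :
    Cardinal.prod (fun i => h (g i)) ≤ Cardinal.prod h := by
  classical
  have hne : ∀ j, Nonempty (h j).out := fun j =>
    Cardinal.mk_ne_zero_iff.1 (by rw [Cardinal.mk_out]; exact (zero_lt_one.trans_le (hh j)).ne')
  have e1 : Cardinal.prod (fun i => h (g i)) = #(∀ i, (h (g i)).out) := by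
    rw [Cardinal.mk_pi]; simp
  have e2 : Cardinal.prod h = #(∀ j, (h j).out) := by
    rw [Cardinal.mk_pi]; simp
  rw [e1, e2]
  refine Cardinal.mk_le_of_injective (f := fun x j =>
    if hj : ∃ i, g i = j then (hj.choose_spec ▸ x hj.choose) else (hne j).some) ?_
  intro x y hxy
  funext i
  have hj : ∃ i', g i' = g i := ⟨i, rfl⟩
  have := congrFun hxy (g i)
  simp only [dif_pos hj] at this
  have hc : hj.choose = i := hg hj.choose_spec
  revert this
  generalize hj.choose_spec = hs
  have key : ∀ (c : ι) (hs : g c = g i), (hs ▸ x c = hs ▸ y c) → x i = y i := by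
    intro c hs hxc
    obtain rfl : c = i := hg hs
    exact hxc
  exact key _ hs

theorem stmt3 (κ : Cardinal.{u}) (hκ : ℵ₀ ≤ κ) :
    Cardinal.prod
      (fun i : κ.ord.ToType => Cardinal.beth ((Ordinal.ToType.mk (o := κ.ord)).symm i).1)
      = Cardinal.beth (κ.ord + 1) := by
  have hlim : Order.IsSuccLimit κ.ord := Cardinal.isSuccLimit_ord hκ
  set e := Ordinal.ToType.mk (o := κ.ord) with he
  set f : κ.ord.ToType → Ordinal := fun i => ((e.symm) i).1 with hf
  have hmk : #κ.ord.ToType = κ := by rw [Cardinal.mk_toType, Cardinal.card_ord]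
  have hκB : κ ≤ Cardinal.beth κ.ord := by
    have hsm : StrictMono (fun o : Ordinal => (Cardinal.beth o).ord) := fun a b hab =>
      Cardinal.ord_lt_ord.2 (Cardinal.beth_lt_beth.2 hab)
    rw [← Cardinal.ord_le_ord]
    exact hsm.le_apply
  have hflt : ∀ i, f i < κ.ord := fun i => (e.symm i).2
  -- upper bound
  have hub : Cardinal.prod (fun i => Cardinal.beth (f i)) ≤ 2 ^ Cardinal.beth κ.ord := by
    calc Cardinal.prod (fun i => Cardinal.beth (f i))
        ≤ Cardinal.prod (fun _ : κ.ord.ToType => 2 ^ Cardinal.beth κ.ord) :=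
          Cardinal.prod_le_prod _ _ fun i =>
            (Cardinal.beth_le_beth.2 (hflt i).le).trans (Cardinal.cantor _).le
      _ = (2 ^ Cardinal.beth κ.ord) ^ #κ.ord.ToType := Cardinal.prod_const' _ _
      _ = 2 ^ (Cardinal.beth κ.ord * κ) := by rw [hmk, ← Cardinal.power_mul]
      _ = 2 ^ Cardinal.beth κ.ord := by
          rw [Cardinal.mul_eq_left (Cardinal.aleph0_le_beth _) hκB
            (Cardinal.aleph0_pos.trans_le hκ).ne']
  -- sup ≤ sum
  have hsup : Cardinal.beth κ.ord ≤ Cardinal.sum (fun i => Cardinal.beth (f i)) := by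
    rw [Cardinal.beth_limit hlim]
    refine ciSup_le' fun a => ?_
    have h1 : Cardinal.beth (f (e a)) ≤ Cardinal.sum (fun i => Cardinal.beth (f i)) :=
      Cardinal.le_sum _ (e a)
    simpa [hf] using h1
  -- successor shift map
  have hsucclt : ∀ i, f i + 1 < κ.ord := fun i => by
    rw [Ordinal.add_one_eq_succ]; exact hlim.succ_lt (hflt i)
  set g : κ.ord.ToType → κ.ord.ToType := fun i => e ⟨f i + 1, hsucclt i⟩ with hg
  have hgf : ∀ i, f (g i) = f i + 1 := fun i => by simp [hf, hg]
  have hginj : Function.Injective g := by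
    intro i j hij
    have h1 : (⟨f i + 1, hsucclt i⟩ : Set.Iio κ.ord) = ⟨f j + 1, hsucclt j⟩ :=
      e.injective hij
    have h2 : f i + 1 = f j + 1 := congrArg Subtype.val h1
    have h3 : f i = f j := by
      rwa [Ordinal.add_one_eq_succ, Ordinal.add_one_eq_succ, Order.succ_eq_succ_iff] at h2
    have : e.symm i = e.symm j := Subtype.ext h3
    simpa using congrArg e this
  -- lower bound
  have hlb : 2 ^ Cardinal.beth κ.ord ≤ Cardinal.prod (fun i => Cardinal.beth (f i)) := by
    calc 2 ^ Cardinal.beth κ.ord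
        ≤ 2 ^ Cardinal.sum (fun i => Cardinal.beth (f i)) :=
          Cardinal.power_le_power_left two_ne_zero hsup
      _ = Cardinal.prod (fun i => 2 ^ Cardinal.beth (f i)) := Cardinal.power_sum _ _
      _ = Cardinal.prod (fun i => Cardinal.beth (f (g i))) := by
          refine congrArg Cardinal.prod (funext fun i => ?_)
          rw [hgf i, Ordinal.add_one_eq_succ, Cardinal.beth_succ]
      _ ≤ Cardinal.prod (fun i => Cardinal.beth (f i)) :=
          aux_prod_comp_le _ (fun j => Cardinal.one_le_iff_pos.2 (Cardinal.beth_pos _)) hginj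
  rw [Ordinal.add_one_eq_succ, Cardinal.beth_succ]
  exact le_antisymm hub hlb
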